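/- Let n ≥ 0 with ⌈n/2⌉ even. The number of permutations π of {1,...,n} with black(π) = white(π) equals ⌊n/2⌋! · ⌈n/2⌉! · C(⌈n/2⌉, ⌈n/2⌉/2) · C(⌊n/2⌋, ⌈n/2⌉/2). -/

import Mathlib

/-- Black contribution of letter `h` at (1-based) index `i`. -/
def blackC (i h : ℕ) : ℕ := if Odd i then (h + 1) / 2 else h / 2

/-- White contribution of letter `h` at (1-based) index `i`. -/
def whiteC (i h : ℕ) : ℕ := if Odd i then h / 2 else (h + 1) / 2

/-- Number of black cells in the bargraph of the word `w`. -/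
def black {n : ℕ} (w : Fin n → ℕ) : ℕ := ∑ i : Fin n, blackC (i.1 + 1) (w i)

/-- Number of white cells in the bargraph of the word `w`. -/
def white {n : ℕ} (w : Fin n → ℕ) : ℕ := ∑ i : Fin n, whiteC (i.1 + 1) (w i)

open Finset Equiv

/-- The set of indices with even value (i.e. odd 1-based position / odd 1-based letter). -/
def Ev (n : ℕ) : Finset (Fin n) := univ.filter (fun i => i.1 % 2 = 0)

lemma card_range_even (n : ℕ) :
    ((Finset.range n).filter (fun x => x % 2 = 0)).card = (n + 1) / 2 := by
  induction n with
  | zero => simp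
  | succ n ih =>
    rw [Finset.range_add_one, Finset.filter_insert]
    by_cases h : n % 2 = 0
    · rw [if_pos h, Finset.card_insert_of_notMem (by simp), ih]; omega
    · rw [if_neg h, ih]; omega

lemma card_Ev (n : ℕ) : (Ev n).card = (n + 1) / 2 := by
  rw [← card_range_even n]
  have himg : (Finset.range n).filter (fun x => x % 2 = 0) = (Ev n).image Fin.val := by
    ext x
    simp only [Finset.mem_filter, Finset.mem_range, Finset.mem_image, Ev, Finset.mem_univ,
      true_and]
    constructor
    · rintro ⟨h1, h2⟩; exact ⟨⟨x, h1⟩, h2, rfl⟩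
    · rintro ⟨a, ha, rfl⟩; exact ⟨a.2, ha⟩
  rw [himg, Finset.card_image_of_injective _ Fin.val_injective]

lemma blackC_eq (i v : ℕ) :
    blackC (i + 1) (v + 1) = (v + 1) / 2 + (if v % 2 = 0 ∧ i % 2 = 0 then 1 else 0) := by
  unfold blackC
  simp only [Nat.odd_iff]
  split_ifs <;> omega

lemma whiteC_eq (i v : ℕ) :
    whiteC (i + 1) (v + 1) = (v + 1) / 2 + (if v % 2 = 0 ∧ ¬ i % 2 = 0 then 1 else 0) := by
  unfold whiteC
  simp only [Nat.odd_iff]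
  split_ifs <;> omega

lemma card_evenval (n : ℕ) (π : Equiv.Perm (Fin n)) :
    (univ.filter fun i : Fin n => (π i).1 % 2 = 0).card = (n + 1) / 2 := by
  rw [← card_Ev n]
  refine Finset.card_nbij' (fun i => π i) (fun i => π.symm i) ?_ ?_ ?_ ?_
  · intro a ha; simp [Ev] at ha ⊢; exact ha
  · intro a ha; simp [Ev] at ha ⊢; exact ha
  · intro a _; simp
  · intro a _; simp

/-- Balance condition rephrased as a counting condition. -/
lemma balance_iff (n : ℕ) (hn : Even ((n + 1) / 2)) (π : Equiv.Perm (Fin n)) :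
    (black (fun i => (π i).1 + 1) = white (fun i => (π i).1 + 1)) ↔
      (univ.filter fun i : Fin n => (π i).1 % 2 = 0 ∧ i.1 % 2 = 0).card = ((n + 1) / 2) / 2 := by
  have hb : black (fun i => (π i).1 + 1) =
      (∑ i : Fin n, ((π i).1 + 1) / 2) +
        (univ.filter fun i : Fin n => (π i).1 % 2 = 0 ∧ i.1 % 2 = 0).card := by
    unfold black
    have hcnt : ∑ i : Fin n, (if (π i).1 % 2 = 0 ∧ i.1 % 2 = 0 then 1 else 0) =
        (univ.filter fun i : Fin n => (π i).1 % 2 = 0 ∧ i.1 % 2 = 0).card := by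
      simp [Finset.sum_boole]
    rw [← hcnt, ← Finset.sum_add_distrib]
    exact Finset.sum_congr rfl fun i _ => blackC_eq i.1 (π i).1
  have hw : white (fun i => (π i).1 + 1) =
      (∑ i : Fin n, ((π i).1 + 1) / 2) +
        (univ.filter fun i : Fin n => (π i).1 % 2 = 0 ∧ ¬ i.1 % 2 = 0).card := by
    unfold white
    have hcnt : ∑ i : Fin n, (if (π i).1 % 2 = 0 ∧ ¬ i.1 % 2 = 0 then 1 else 0) =
        (univ.filter fun i : Fin n => (π i).1 % 2 = 0 ∧ ¬ i.1 % 2 = 0).card := by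
      simp [Finset.sum_boole]
    rw [← hcnt, ← Finset.sum_add_distrib]
    exact Finset.sum_congr rfl fun i _ => whiteC_eq i.1 (π i).1
  have hsplit :
      (univ.filter fun i : Fin n => (π i).1 % 2 = 0 ∧ i.1 % 2 = 0).card +
      (univ.filter fun i : Fin n => (π i).1 % 2 = 0 ∧ ¬ i.1 % 2 = 0).card = (n + 1) / 2 := by
    rw [← card_evenval n π]
    rw [← Finset.filter_filter, ← Finset.filter_filter]
    exact Finset.card_filter_add_card_filter_not _
  obtain ⟨t, ht⟩ := hn
  rw [hb, hw]
  omega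

/-- The setwise stabilizer of `Ev n` in the symmetric group has `m! * k!` elements. -/
lemma stab_card (n : ℕ) :
    (univ.filter fun π : Equiv.Perm (Fin n) => (Ev n).image π = Ev n).card =
      ((n + 1) / 2).factorial * (n / 2).factorial := by
  classical
  rw [← Fintype.card_subtype]
  have key : ∀ π : Equiv.Perm (Fin n),
      (Ev n).image π = Ev n ↔ (fun i : Fin n => decide (i.1 % 2 = 0)) ∘ π =
        (fun i : Fin n => decide (i.1 % 2 = 0)) := by
    intro π
    constructor
    · intro h
      funext i
      by_cases hi : i ∈ Ev n
      · have : π i ∈ Ev n := h ▸ Finset.mem_image_of_mem _ hi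
        simp [Ev, Finset.mem_filter] at hi this
        simp [hi, this]
      · have : π i ∉ Ev n := by
          intro hc
          rw [← h] at hc
          obtain ⟨i', hi', hii⟩ := Finset.mem_image.mp hc
          exact hi (π.injective hii ▸ hi')
        simp [Ev, Finset.mem_filter] at hi this
        simp [hi, this]
    · intro h
      apply Finset.eq_of_subset_of_card_le
      · intro x hx
        obtain ⟨i, hi, rfl⟩ := Finset.mem_image.mp hx
        have := congrFun h i
        simp [Ev, Finset.mem_filter] at hi ⊢
        simpa [hi] using this
      · rw [Finset.card_image_of_injective _ π.injective]
  rw [Fintype.card_congr (Equiv.subtypeEquivRight key)]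
  rw [DomMulAct.stabilizer_card]
  rw [Fintype.prod_bool]
  have h1 : Fintype.card {a : Fin n // decide (a.1 % 2 = 0) = true} = (n + 1) / 2 := by
    rw [Fintype.card_subtype]
    rw [← card_Ev n]
    congr 1
    ext i
    simp [Ev]
  have h2 : Fintype.card {a : Fin n // decide (a.1 % 2 = 0) = false} = n / 2 := by
    have := Fintype.card_subtype_compl (p := fun a : Fin n => decide (a.1 % 2 = 0) = true)
    have hc : ∀ a : Fin n, (¬ decide (a.1 % 2 = 0) = true) ↔ decide (a.1 % 2 = 0) = false := by
      intro a; simp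
    rw [Fintype.card_congr (Equiv.subtypeEquivRight fun a => (hc a).symm)]
    rw [this, h1, Fintype.card_fin]
    omega
  rw [h1, h2]

lemma subtypeCongr_apply_mem {n : ℕ} {P A : Finset (Fin n)}
    (e : {x : Fin n // x ∈ P} ≃ {x : Fin n // x ∈ A})
    (f : {x : Fin n // ¬ x ∈ P} ≃ {x : Fin n // ¬ x ∈ A}) {x : Fin n} (hx : x ∈ P) :
    Equiv.subtypeCongr e f x = (e ⟨x, hx⟩ : Fin n) := by
  unfold Equiv.subtypeCongr
  simp [Equiv.sumCompl_symm_apply_of_pos hx]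

/-- All fibers of `π ↦ (Ev n).image π` over sets of the right cardinality have the same size. -/
lemma fiber_card (n : ℕ) (A : Finset (Fin n)) (hA : A.card = (n + 1) / 2) :
    (univ.filter fun π : Equiv.Perm (Fin n) => (Ev n).image π = A).card =
      ((n + 1) / 2).factorial * (n / 2).factorial := by
  classical
  have hEv : (Ev n).card = (n + 1) / 2 := card_Ev n
  -- build a permutation π₀ with (Ev n).image π₀ = A
  have hcard1 : Fintype.card {x : Fin n // x ∈ Ev n} = Fintype.card {x : Fin n // x ∈ A} := by
    simp only [Fintype.card_coe]
    rw [hEv, hA]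
  have hcard2 : Fintype.card {x : Fin n // ¬ x ∈ Ev n} = Fintype.card {x : Fin n // ¬ x ∈ A} := by
    rw [Fintype.card_subtype_compl, Fintype.card_subtype_compl, hcard1]
  obtain e := Fintype.equivOfCardEq hcard1
  obtain f := Fintype.equivOfCardEq hcard2
  set π₀ : Equiv.Perm (Fin n) := Equiv.subtypeCongr e f with hπ₀
  have h₀ : (Ev n).image π₀ = A := by
    apply Finset.eq_of_subset_of_card_le
    · intro x hx
      obtain ⟨i, hi, rfl⟩ := Finset.mem_image.mp hx
      rw [hπ₀, subtypeCongr_apply_mem e f hi]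
      exact (e ⟨i, hi⟩).2
    · rw [Finset.card_image_of_injective _ π₀.injective, hEv, hA]
  have hsymm : A.image π₀.symm = Ev n := by
    rw [← h₀, Finset.image_image]
    have : (⇑π₀.symm ∘ ⇑π₀) = id := by funext x; simp
    rw [this, Finset.image_id]
  rw [← stab_card n]
  refine Finset.card_nbij' (fun π => π.trans π₀.symm) (fun σ => σ.trans π₀) ?_ ?_ ?_ ?_
  · intro π hπ
    simp only [Finset.mem_coe, Finset.mem_filter, Finset.mem_univ, true_and] at hπ ⊢
    rw [show ⇑(π.trans π₀.symm) = ⇑π₀.symm ∘ ⇑π from rfl, ← Finset.image_image, hπ, hsymm]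
  · intro σ hσ
    simp only [Finset.mem_coe, Finset.mem_filter, Finset.mem_univ, true_and] at hσ ⊢
    rw [show ⇑(σ.trans π₀) = ⇑π₀ ∘ ⇑σ from rfl, ← Finset.image_image, hσ, h₀]
  · intro π _; ext i; simp
  · intro σ _; ext i; simp

/-- The number of `m`-subsets meeting `Ev n` in exactly `j` elements. -/
lemma card_t (n j : ℕ) (hj : j ≤ (n + 1) / 2) :
    (((univ : Finset (Fin n)).powersetCard ((n + 1) / 2)).filter
        fun A => (A ∩ Ev n).card = j).card =
      Nat.choose ((n + 1) / 2) j * Nat.choose (n / 2) ((n + 1) / 2 - j) := by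
  classical
  have hEv : (Ev n).card = (n + 1) / 2 := card_Ev n
  have hEvc : (Ev n)ᶜ.card = n / 2 := by
    rw [Finset.card_compl, hEv, Fintype.card_fin]; omega
  have key : (((univ : Finset (Fin n)).powersetCard ((n + 1) / 2)).filter
        fun A => (A ∩ Ev n).card = j).card =
      ((Ev n).powersetCard j ×ˢ ((Ev n)ᶜ).powersetCard ((n + 1) / 2 - j)).card := by
    refine Finset.card_nbij' (fun A => (A ∩ Ev n, A \ Ev n)) (fun p => p.1 ∪ p.2) ?_ ?_ ?_ ?_
    · intro A hA
      simp only [Finset.mem_coe, Finset.mem_filter, Finset.mem_powersetCard] at hA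
      obtain ⟨⟨_, hAcard⟩, hAj⟩ := hA
      have hsd := Finset.card_inter_add_card_sdiff A (Ev n)
      simp only [Finset.mem_coe, Finset.mem_product, Finset.mem_powersetCard]
      refine ⟨⟨Finset.inter_subset_right, hAj⟩, ?_, by omega⟩
      intro x hx
      simp only [Finset.mem_sdiff] at hx
      simpa using hx.2
    · intro p hp
      simp only [Finset.mem_coe, Finset.mem_product, Finset.mem_powersetCard] at hp
      obtain ⟨⟨hS, hScard⟩, hT, hTcard⟩ := hp
      have hdisj : Disjoint p.1 p.2 := by
        refine Finset.disjoint_left.mpr fun x hx1 hx2 => ?_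
        have := hT hx2
        simp only [Finset.mem_compl] at this
        exact this (hS hx1)
      simp only [Finset.mem_coe, Finset.mem_filter, Finset.mem_powersetCard]
      refine ⟨⟨Finset.subset_univ _, ?_⟩, ?_⟩
      · rw [Finset.card_union_of_disjoint hdisj, hScard, hTcard]; omega
      · have h1 : p.1 ∩ Ev n = p.1 := Finset.inter_eq_left.mpr hS
        have h2 : p.2 ∩ Ev n = ∅ := by
          refine Finset.eq_empty_of_forall_notMem fun x hx => ?_
          simp only [Finset.mem_inter] at hx
          have := hT hx.1
          simp only [Finset.mem_compl] at this
          exact this hx.2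
        rw [Finset.union_inter_distrib_right, h1, h2, Finset.union_empty, hScard]
    · intro A _
      ext x
      simp only [Finset.mem_union, Finset.mem_inter, Finset.mem_sdiff]
      tauto
    · intro p hp
      simp only [Finset.mem_coe, Finset.mem_product, Finset.mem_powersetCard] at hp
      obtain ⟨⟨hS, _⟩, hT, _⟩ := hp
      have h1 : p.1 ∩ Ev n = p.1 := Finset.inter_eq_left.mpr hS
      have h2 : p.2 ∩ Ev n = ∅ := by
        refine Finset.eq_empty_of_forall_notMem fun x hx => ?_
        simp only [Finset.mem_inter] at hx
        have := hT hx.1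
        simp only [Finset.mem_compl] at this
        exact this hx.2
      have h3 : p.1 \ Ev n = ∅ := by
        rw [Finset.sdiff_eq_empty_iff_subset]; exact hS
      have h4 : p.2 \ Ev n = p.2 := by
        apply Finset.sdiff_eq_self_of_disjoint
        exact Finset.disjoint_left.mpr fun x hx1 hx2 => by
          have := hT hx1; simp only [Finset.mem_compl] at this; exact this hx2
      refine Prod.ext ?_ ?_
      · simp only [Finset.union_inter_distrib_right, h1, h2, Finset.union_empty]
      · simp only [Finset.union_sdiff_distrib, h3, h4, Finset.empty_union]
  rw [key, Finset.card_product, Finset.card_powersetCard, Finset.card_powersetCard, hEv, hEvc]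

/-- Main counting lemma. -/
lemma count_perms (n j : ℕ) (hj : j ≤ (n + 1) / 2) :
    (univ.filter fun π : Equiv.Perm (Fin n) =>
        (univ.filter fun i : Fin n => (π i).1 % 2 = 0 ∧ i.1 % 2 = 0).card = j).card =
      Nat.choose ((n + 1) / 2) j * Nat.choose (n / 2) ((n + 1) / 2 - j) *
        (((n + 1) / 2).factorial * (n / 2).factorial) := by
  classical
  have hEv : (Ev n).card = (n + 1) / 2 := card_Ev n
  -- rewrite the inner filter cardinality as an image-intersection cardinality
  have hinner : ∀ π : Equiv.Perm (Fin n),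
      (univ.filter fun i : Fin n => (π i).1 % 2 = 0 ∧ i.1 % 2 = 0).card =
        ((Ev n).image π ∩ Ev n).card := by
    intro π
    have h1 : (univ.filter fun i : Fin n => (π i).1 % 2 = 0 ∧ i.1 % 2 = 0) =
        (Ev n).filter (fun i => π i ∈ Ev n) := by
      ext i; simp [Ev, and_comm]
    rw [h1]
    have h2 : ((Ev n).filter (fun i => π i ∈ Ev n)).image π =
        ((Ev n).image π).filter (fun x => x ∈ Ev n) := by
      rw [Finset.filter_image]
    rw [← Finset.card_image_of_injective _ π.injective, h2, Finset.filter_mem_eq_inter]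
  set s := (univ.filter fun π : Equiv.Perm (Fin n) =>
      (univ.filter fun i : Fin n => (π i).1 % 2 = 0 ∧ i.1 % 2 = 0).card = j) with hs
  set t := (((univ : Finset (Fin n)).powersetCard ((n + 1) / 2)).filter
      fun A => (A ∩ Ev n).card = j) with hts
  have hmap : ∀ π ∈ s, (Ev n).image ⇑π ∈ t := by
    intro π hπ
    rw [hs, Finset.mem_filter] at hπ
    rw [hts, Finset.mem_filter, Finset.mem_powersetCard]
    exact ⟨⟨Finset.subset_univ _, by rw [Finset.card_image_of_injective _ π.injective, hEv]⟩,
      by rw [← hinner π, hπ.2]⟩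
  rw [Finset.card_eq_sum_card_fiberwise hmap]
  have hfib : ∀ A ∈ t,
      (s.filter fun π : Equiv.Perm (Fin n) => (Ev n).image π = A).card =
        ((n + 1) / 2).factorial * (n / 2).factorial := by
    intro A hA
    rw [hts, Finset.mem_filter, Finset.mem_powersetCard] at hA
    obtain ⟨⟨_, hAcard⟩, hAj⟩ := hA
    have hset : (s.filter fun π : Equiv.Perm (Fin n) => (Ev n).image π = A) =
        univ.filter fun π : Equiv.Perm (Fin n) => (Ev n).image π = A := by
      rw [hs, Finset.filter_filter]
      ext π
      simp only [Finset.mem_filter, Finset.mem_univ, true_and, and_iff_right_iff_imp]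
      intro h
      rw [hinner π, h, hAj]
    rw [hset]
    exact fiber_card n A hAcard
  rw [Finset.sum_congr rfl hfib, Finset.sum_const, smul_eq_mul, hts, card_t n j hj]

theorem stmt_11 (n : ℕ) (h : Even ((n + 1) / 2)) :
    (Finset.univ.filter fun π : Equiv.Perm (Fin n) =>
        black (fun i => (π i).1 + 1) = white (fun i => (π i).1 + 1)).card =
      (n / 2).factorial * ((n + 1) / 2).factorial *
        Nat.choose ((n + 1) / 2) (((n + 1) / 2) / 2) *
        Nat.choose (n / 2) (((n + 1) / 2) / 2) := by
  classical
  have hfilter : (Finset.univ.filter fun π : Equiv.Perm (Fin n) =>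
        black (fun i => (π i).1 + 1) = white (fun i => (π i).1 + 1)) =
      (univ.filter fun π : Equiv.Perm (Fin n) =>
        (univ.filter fun i : Fin n => (π i).1 % 2 = 0 ∧ i.1 % 2 = 0).card = ((n + 1) / 2) / 2) := by
    ext π
    simp only [Finset.mem_filter, Finset.mem_univ, true_and]
    exact balance_iff n h π
  rw [hfilter, count_perms n (((n + 1) / 2) / 2) (by omega)]
  obtain ⟨t, ht⟩ := h
  have h1 : (n + 1) / 2 - ((n + 1) / 2) / 2 = ((n + 1) / 2) / 2 := by omega
  rw [h1]
  ring
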